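/- Let X_n be the Class DIII Wigner-type ensemble, let m ≥ 3, let g = γ^ν be a cyclic shift of [m], and let P = (P_{i,l}) be a multi-index in S_n^{good}(π̂_g) such that for every l ∈ [m] the 2×2 matrix [[p_{1,l}, q_{1,l}],[p_{2,g(l)}, q_{2,g(l)}]] equals nΔ_l + A(a_l,b_l) for some Δ-matrix Δ_l and some a_l ≠ b_l in [n] (so the associated pattern is substantial and (Δ_l) satisfies the domino condition). If P_{1,l} = P_{2,g(l)} for some l ∈ [m], then P_{1,l} = P_{2,g(l)} for all l ∈ [m], and ∏_{l=1}^m E[a_n(P_{1,l})·a_n(P_{2,g(l)})] = (−1)^m·σ^{2m}. -/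

import Mathlib

open MeasureTheory ProbabilityTheory Matrix Filter

noncomputable section

/-- `blk d a` is index `a` in the first block row/column if `d = 0`, and in the
second block row/column otherwise (encoding `n·d + a` in `[2n]`). -/
def blk {n : ℕ} (d : ℕ) (a : Fin n) : Fin n ⊕ Fin n :=
  if d = 0 then Sum.inl a else Sum.inr a

/-- A Δ-matrix: a `2 × 2` matrix with entries in `{0,1}` whose entries sum to an
even number. -/
def IsDelta (D : Matrix (Fin 2) (Fin 2) ℕ) : Prop :=
  (∀ i j, D i j ≤ 1) ∧ Even (D 0 0 + D 0 1 + D 1 0 + D 1 1)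

/-- The (unnormalized) class DIII block matrix built from `X₁, X₂`; its `(p,q)` entry
is `a_n(p,q)`, the `(p,q)` entry of `√(2n)·X_n`. -/
def dIIIBlock {n : ℕ} (X₁ X₂ : Matrix (Fin n) (Fin n) ℂ) :
    Matrix (Fin n ⊕ Fin n) (Fin n ⊕ Fin n) ℂ :=
  Matrix.fromBlocks X₁ X₂ X₂ (-X₁)

/-- The space `M_n^{DIII}`: block matrices `[[X₁,X₂],[X₂,−X₁]]` with `X₁, X₂`
skew-symmetric with purely imaginary entries. `[2n]` is encoded as `Fin n ⊕ Fin n`. -/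
def MDIII (n : ℕ) : Set (Matrix (Fin n ⊕ Fin n) (Fin n ⊕ Fin n) ℂ) :=
  {M | ∃ X₁ X₂ : Matrix (Fin n) (Fin n) ℂ,
    (∀ a b, (X₁ a b).re = 0) ∧ (∀ a b, (X₂ a b).re = 0) ∧
    X₁ᵀ = -X₁ ∧ X₂ᵀ = -X₂ ∧ M = Matrix.fromBlocks X₁ X₂ X₂ (-X₁)}

/-- The coordinate functional `X ↦ X_{p,q}` on `M_n^{DIII}` is nonzero. -/
def NonzeroAtDIII (n : ℕ) (P : (Fin n ⊕ Fin n) × (Fin n ⊕ Fin n)) : Prop :=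
  ∃ M ∈ MDIII n, M P.1 P.2 ≠ 0

/-- `(p,q) ∼ (r,s)`: both coordinate functionals on `M_n^{DIII}` are nonzero and
equal up to sign. -/
def simDIII (n : ℕ) (P Q : (Fin n ⊕ Fin n) × (Fin n ⊕ Fin n)) : Prop :=
  NonzeroAtDIII n P ∧ NonzeroAtDIII n Q ∧
    ((∀ M ∈ MDIII n, M Q.1 Q.2 = M P.1 P.2) ∨
      (∀ M ∈ MDIII n, M Q.1 Q.2 = -(M P.1 P.2)))

/-- A multi-index `P = (P_{i,l}) = ((p_{i,l},q_{i,l}))` is consistent if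
`q_{i,l} = p_{i,l+1}` cyclically, for `i = 1, 2`. -/
def IsConsistent {n m : ℕ} [NeZero m]
    (P : Fin 2 → Fin m → ((Fin n ⊕ Fin n) × (Fin n ⊕ Fin n))) : Prop :=
  ∀ i l, (P i l).2 = (P i (l + 1)).1

/-- `P ∈ S_n^{good}(π̂_g)`: `P` is a consistent multi-index, every `P_{i,l}` lies in
the domain of `∼`, and the `∼`-relations among the `2m` index pairs are exactly those
given by the pair partition `π̂_g = {{(1,l),(2,g(l))} : l ∈ [m]}`. -/
def SGoodDIII (n m : ℕ) [NeZero m] (g : Fin m → Fin m)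
    (P : Fin 2 → Fin m → ((Fin n ⊕ Fin n) × (Fin n ⊕ Fin n))) : Prop :=
  IsConsistent P ∧ (∀ i l, NonzeroAtDIII n (P i l)) ∧
    ∀ i l i' l', simDIII n (P i l) (P i' l') ↔
      ((i = i' ∧ l = l') ∨ (i = 0 ∧ i' = 1 ∧ l' = g l) ∨ (i = 1 ∧ i' = 0 ∧ l = g l'))

lemma blk_inj {n : ℕ} {d d' : ℕ} {x y : Fin n} (hd : d ≤ 1) (hd' : d' ≤ 1)
    (h : blk d x = blk d' y) : d = d' ∧ x = y := by
  unfold blk at h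
  interval_cases d <;> interval_cases d' <;> simp_all

lemma sq_of_im {z : ℂ} (hz : z.re = 0) :
    z ^ 2 = ((-(‖z‖ ^ 2) : ℝ) : ℂ) := by
  apply Complex.ext
  · have h := Complex.sq_norm z
    rw [Complex.normSq_apply, hz] at h
    simp [pow_two, Complex.mul_re, hz]
    nlinarith [h]
  · simp [pow_two, Complex.mul_im, hz]

theorem stmt7
    {Ω : Type*} [MeasurableSpace Ω] (μ : Measure Ω) [IsProbabilityMeasure μ]
    (σ : ℝ) (hσ : 0 < σ)
    (X : (n : ℕ) → Fin 2 → Ω → Matrix (Fin n) (Fin n) ℂ)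
    (hmeas : ∀ n i a b, Measurable fun ω => X n i ω a b)
    (him : ∀ n i ω a b, (X n i ω a b).re = 0)
    (hskew : ∀ n i ω a b, X n i ω b a = - X n i ω a b)
    (hindep : ∀ n, iIndepFun
      (fun (v : {v : Fin 2 × Fin n × Fin n // v.2.1 < v.2.2}) ω =>
        X n v.1.1 ω v.1.2.1 v.1.2.2) μ)
    (hcent : ∀ n i a b, ∫ ω, X n i ω a b ∂μ = 0)
    (hvar : ∀ n i (a b : Fin n), a ≠ b → ∫ ω, ‖X n i ω a b‖ ^ 2 ∂μ = σ ^ 2)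
    (hmom : ∀ k : ℕ, ∃ C : ℝ, ∀ n i (a b : Fin n),
      ∫ ω, ‖X n i ω a b‖ ^ k ∂μ ≤ C)
    (m : ℕ) [NeZero m] (hm : 3 ≤ m) (ν : ℕ) (hν : ν < m)
    (g : Fin m → Fin m) (hg : g = fun l => l + ⟨ν, hν⟩)
    (n : ℕ) (P : Fin 2 → Fin m → ((Fin n ⊕ Fin n) × (Fin n ⊕ Fin n)))
    (hP : SGoodDIII n m g P)
    (Δ : Fin m → Matrix (Fin 2) (Fin 2) ℕ) (hΔ : ∀ l, IsDelta (Δ l))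
    (a b : Fin m → Fin n) (hab : ∀ l, a l ≠ b l)
    -- `[[p_{1,l}, q_{1,l}],[p_{2,g(l)}, q_{2,g(l)}]] = nΔ_l + A(a_l, b_l)`
    (hinst : ∀ l, P 0 l = (blk (Δ l 0 0) (a l), blk (Δ l 0 1) (b l)) ∧
      P 1 (g l) = (blk (Δ l 1 0) (a l), blk (Δ l 1 1) (b l)))
    (hex : ∃ l, P 0 l = P 1 (g l)) :
    (∀ l, P 0 l = P 1 (g l)) ∧
    ∏ l : Fin m, ∫ ω, dIIIBlock (X n 0 ω) (X n 1 ω) (P 0 l).1 (P 0 l).2 *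
        dIIIBlock (X n 0 ω) (X n 1 ω) (P 1 (g l)).1 (P 1 (g l)).2 ∂μ
      = (-1 : ℂ) ^ m * (σ : ℂ) ^ (2 * m) := by
  obtain ⟨hcons, -, -⟩ := hP
  -- domino condition from consistency
  have hb : ∀ l : Fin m, Δ l 0 1 = Δ (l+1) 0 0 ∧ Δ l 1 1 = Δ (l+1) 1 0 := by
    intro l
    have h0 := hcons 0 l
    have h1 := hcons 1 (g l)
    rw [(hinst l).1, (hinst (l+1)).1] at h0
    open Fin.CommRing in have hgl : g l + 1 = g (l + 1) := by simp only [hg]; ring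
    rw [(hinst l).2, hgl, (hinst (l+1)).2] at h1
    simp only at h0 h1
    exact ⟨(blk_inj ((hΔ l).1 0 1) ((hΔ (l+1)).1 0 0) h0).1,
      (blk_inj ((hΔ l).1 1 1) ((hΔ (l+1)).1 1 0) h1).1⟩
  have step : ∀ l, P 0 l = P 1 (g l) → P 0 (l+1) = P 1 (g (l+1)) := by
    intro l h
    rw [(hinst l).1, (hinst l).2, Prod.mk.injEq] at h
    have h2 : Δ l 0 1 = Δ l 1 1 := (blk_inj ((hΔ l).1 0 1) ((hΔ l).1 1 1) h.2).1
    have e00 := (hΔ (l+1)).1 0 0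
    have e01 := (hΔ (l+1)).1 0 1
    have e10 := (hΔ (l+1)).1 1 0
    have e11 := (hΔ (l+1)).1 1 1
    have hev := (hΔ (l+1)).2
    rw [Nat.even_iff] at hev
    have hcol1 : Δ (l+1) 0 0 = Δ (l+1) 1 0 := by
      rw [← (hb l).1, ← (hb l).2, h2]
    have hcol2 : Δ (l+1) 0 1 = Δ (l+1) 1 1 := by omega
    rw [(hinst (l+1)).1, (hinst (l+1)).2, hcol1, hcol2]
  obtain ⟨l₀, hl₀⟩ := hex
  open Fin.CommRing in
  have all : ∀ l, P 0 l = P 1 (g l) := by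
    have key : ∀ k : ℕ, P 0 (l₀ + (k : Fin m)) = P 1 (g (l₀ + (k : Fin m))) := by
      intro k
      induction k with
      | zero => simpa using hl₀
      | succ k ih =>
        have := step _ ih
        rwa [show (l₀ + ((k : ℕ) : Fin m) + 1 : Fin m)
            = l₀ + (((k + 1 : ℕ) : Fin m)) by push_cast; ring] at this
    intro l
    have := key (l - l₀).val
    rwa [Fin.cast_val_eq_self, show l₀ + (l - l₀) = l by ring] at this
  refine ⟨all, ?_⟩
  have factor : ∀ l, (∫ ω, dIIIBlock (X n 0 ω) (X n 1 ω) (P 0 l).1 (P 0 l).2 *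
      dIIIBlock (X n 0 ω) (X n 1 ω) (P 1 (g l)).1 (P 1 (g l)).2 ∂μ) = -(σ:ℂ)^2 := by
    intro l
    have key : ∀ i : Fin 2, (∫ ω, (X n i ω (a l) (b l)) * (X n i ω (a l) (b l)) ∂μ)
        = -(σ:ℂ)^2 := by
      intro i
      have ptw : ∀ ω, (X n i ω (a l) (b l)) * (X n i ω (a l) (b l))
          = ((-(‖X n i ω (a l) (b l)‖ ^ 2) : ℝ) : ℂ) := by
        intro ω
        rw [← pow_two, sq_of_im (him n i ω (a l) (b l))]
      simp_rw [ptw]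
      calc (∫ ω, ((-(‖X n i ω (a l) (b l)‖ ^ 2) : ℝ) : ℂ) ∂μ)
          = ((∫ ω, -(‖X n i ω (a l) (b l)‖ ^ 2) ∂μ : ℝ) : ℂ) := integral_ofReal
        _ = -(σ:ℂ)^2 := by
            rw [integral_neg, hvar n i (a l) (b l) (hab l)]; push_cast; ring
    rw [← all l, (hinst l).1]
    have d0 : Δ l 0 0 = 0 ∨ Δ l 0 0 = 1 := by have := (hΔ l).1 0 0; omega
    have d1 : Δ l 0 1 = 0 ∨ Δ l 0 1 = 1 := by have := (hΔ l).1 0 1; omega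
    rcases d0 with h0 | h0 <;> rcases d1 with h1 | h1 <;>
      simp only [h0, h1, blk, if_pos rfl, if_neg one_ne_zero, dIIIBlock,
        Matrix.fromBlocks_apply₁₁, Matrix.fromBlocks_apply₁₂,
        Matrix.fromBlocks_apply₂₁, Matrix.fromBlocks_apply₂₂,
        Matrix.neg_apply, neg_mul_neg] <;>
      exact key _
  rw [Finset.prod_congr rfl fun l _ => factor l, Finset.prod_const]
  simp only [Finset.card_univ, Fintype.card_fin]
  rw [show -(σ:ℂ)^2 = (-1) * (σ:ℂ)^2 by ring, mul_pow, ← pow_mul, mul_comm 2 m]
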